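/- Let n, V ∈ ℕ with V ≥ 1 be the numbers of trips and vehicles, let a : Fin n → Fin V assign each trip to a vehicle, let t : Fin n → ℝ with 0 ≤ t l be the driving duration of each trip, let d : Fin n → ℝ be the departure times, and let lb : Fin n → ℝ be lower bounds with lb l ≤ d l for all l. Assume (i) departures respect the trip sequence: d i ≤ d j whenever i ≤ j; and (ii) a vehicle can start a trip only after returning from its previous trip: if a i = a j and i < j then d i + t i ≤ d j. Then for every trip index m with V ≤ m, there exists an index l with m − V ≤ l < m such that d m ≥ lb l + t l; equivalently, the departure time of trip m is at least the minimum of lb l + t l over the V trips immediately preceding it. -/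

import Mathlib

/-- With `V` vehicles dispatching `n` trips in a fixed sequence (departures
nondecreasing along the sequence, and a vehicle can start a trip only after
returning from its previous one), the departure time of trip `m` (with
`V ≤ m`) is at least `lb l + t l` for some of the `V` trips `l` immediately
preceding it. -/
theorem subsequent_trips_overlapping
    (n V : ℕ) (hV : 1 ≤ V)
    (a : Fin n → Fin V) (t : Fin n → ℝ) (ht : ∀ l, 0 ≤ t l)
    (d lb : Fin n → ℝ) (hlb : ∀ l, lb l ≤ d l)
    (hseq : ∀ i j : Fin n, i ≤ j → d i ≤ d j)
    (hveh : ∀ i j : Fin n, a i = a j → i < j → d i + t i ≤ d j)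
    (m : Fin n) (hm : V ≤ (m : ℕ)) :
    ∃ l : Fin n, (m : ℕ) - V ≤ (l : ℕ) ∧ (l : ℕ) < (m : ℕ) ∧
      lb l + t l ≤ d m := by
  -- indices m - V + k for k : Fin (V+1) are all ≤ m < n
  have hidx : ∀ k : Fin (V + 1), (m : ℕ) - V + (k : ℕ) < n := by
    intro k
    have hk : (k : ℕ) ≤ V := Nat.lt_succ_iff.mp k.isLt
    have : (m : ℕ) - V + (k : ℕ) ≤ (m : ℕ) := by omega
    exact lt_of_le_of_lt this m.isLt
  set f : Fin (V + 1) → Fin V := fun k => a ⟨(m : ℕ) - V + (k : ℕ), hidx k⟩ with hf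
  have hcard : Fintype.card (Fin V) < Fintype.card (Fin (V + 1)) := by
    simp
  obtain ⟨x, y, hxy, hfeq⟩ := Fintype.exists_ne_map_eq_of_card_lt f hcard
  -- handle both orders symmetrically
  have key : ∀ x y : Fin (V + 1), x < y → f x = f y →
      ∃ l : Fin n, (m : ℕ) - V ≤ (l : ℕ) ∧ (l : ℕ) < (m : ℕ) ∧ lb l + t l ≤ d m := by
    intro x y hlt hfe
    refine ⟨⟨(m : ℕ) - V + (x : ℕ), hidx x⟩, by simp, ?_, ?_⟩
    · have hy : (y : ℕ) ≤ V := Nat.lt_succ_iff.mp y.isLt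
      have : (x : ℕ) < (y : ℕ) := hlt
      simp only []
      omega
    · set i : Fin n := ⟨(m : ℕ) - V + (x : ℕ), hidx x⟩
      set j : Fin n := ⟨(m : ℕ) - V + (y : ℕ), hidx y⟩
      have hij : i < j := by
        have : (x : ℕ) < (y : ℕ) := hlt
        simp only [Fin.lt_def]
        exact (show (m : ℕ) - V + (x : ℕ) < (m : ℕ) - V + (y : ℕ) by omega)
      have h1 : d i + t i ≤ d j := hveh i j hfe hij
      have hjm : j ≤ m := by
        have hy : (y : ℕ) ≤ V := Nat.lt_succ_iff.mp y.isLt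
        simp only [Fin.le_def]
        exact (show (m : ℕ) - V + (y : ℕ) ≤ (m : ℕ) by omega)
      have h2 : d j ≤ d m := hseq j m hjm
      have h3 : lb i + t i ≤ d i + t i := add_le_add_left (hlb i) _
      linarith
  rcases lt_or_gt_of_ne hxy with hlt | hlt
  · exact key x y hlt hfeq
  · exact key y x hlt hfeq.symm
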